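/- If τ is a permutation such that P(τ) contains no 213-chain, then P(τ) has a linear extension that avoids the pattern 213. -/

import Mathlib

/-- A permutation of length `n` (a bijection of `{0, …, n-1}`, identified with the
sequence of its values), packaged with its length. -/
abbrev PermSig : Type := Σ n : ℕ, Equiv.Perm (Fin n)

/-- Pattern containment: the permutation `α` of length `k` is contained in the
permutation `τ` of length `n` if there is an increasing choice of positions on which
`τ` is order-isomorphic to `α`. -/
def Contains {k n : ℕ} (α : Equiv.Perm (Fin k)) (τ : Equiv.Perm (Fin n)) : Prop :=
  ∃ f : Fin k ↪o Fin n, ∀ i j : Fin k, α i < α j ↔ τ (f i) < τ (f j)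

/-- The avoidance class `Av B`: all permutations containing no member of `B`. -/
def Av (B : Set PermSig) : Set PermSig :=
  {τ : PermSig | ∀ β ∈ B, ¬ Contains β.2 τ.2}

/-- A pattern class: a set of permutations downward closed under pattern containment. -/
def IsPatternClass (C : Set PermSig) : Prop :=
  ∀ (k n : ℕ) (α : Equiv.Perm (Fin k)) (τ : Equiv.Perm (Fin n)),
    Contains α τ → (⟨n, τ⟩ : PermSig) ∈ C → (⟨k, α⟩ : PermSig) ∈ C

/-- The base relation of the poset `P(τ)` on values: `x ≺ y` whenever `x` appears
before `y` in `τ` and either `x > y`, or some value `z` appears between `x` and `y`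
in `τ` with `x < y < z`. -/
def PQBase {n : ℕ} (τ : Equiv.Perm (Fin n)) (x y : Fin n) : Prop :=
  τ.symm x < τ.symm y ∧
    (y < x ∨ ∃ z : Fin n, τ.symm x < τ.symm z ∧ τ.symm z < τ.symm y ∧ x < y ∧ y < z)

/-- The poset `P(τ)`: the transitive closure of the base relation. -/
def PQ {n : ℕ} (τ : Equiv.Perm (Fin n)) : Fin n → Fin n → Prop :=
  Relation.TransGen (PQBase τ)

/-- `σ` is a linear extension of `P(τ)`; equivalently, `(σ, τ)` is an allowable pair,
i.e. a priority queue can produce output `τ` from input `σ`. -/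
def Allowable {n : ℕ} (σ τ : Equiv.Perm (Fin n)) : Prop :=
  ∀ x y : Fin n, PQ τ x y → σ.symm x < σ.symm y

/-- `C𝒜`: the set of permutations obtainable by a priority queue from an input in `C`. -/
def ImageA (C : Set PermSig) : Set PermSig :=
  {τ : PermSig | ∃ σ : Equiv.Perm (Fin τ.1), (⟨τ.1, σ⟩ : PermSig) ∈ C ∧ Allowable σ τ.2}

/-- `P(τ)` has an `α`-chain: values `a 0 ≺ a 1 ≺ … ≺ a (k-1)` forming a chain of
`P(τ)` whose pattern is `α`. -/
def HasChain {k n : ℕ} (α : Equiv.Perm (Fin k)) (τ : Equiv.Perm (Fin n)) : Prop :=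
  ∃ a : Fin k → Fin n,
    (∀ i j : Fin k, i < j → PQ τ (a i) (a j)) ∧
    (∀ i j : Fin k, a i < a j ↔ α i < α j)

/-- The pattern `213` (written 0-indexed). -/
noncomputable def p213 : Equiv.Perm (Fin 3) :=
  Equiv.ofBijective (![1, 0, 2] : Fin 3 → Fin 3) (by decide)

section Aux

variable {n : ℕ} (τ : Equiv.Perm (Fin n))

lemma pq_pos {x y : Fin n} (h : PQ τ x y) : τ.symm x < τ.symm y := by
  induction h with
  | single h => exact h.1
  | tail _ h ih => exact ih.trans h.1

lemma pq_irrefl (x : Fin n) : ¬ PQ τ x x := fun h => lt_irrefl _ (pq_pos τ h)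

lemma pq_asymm {x y : Fin n} (h1 : PQ τ x y) (h2 : PQ τ y x) : False :=
  lt_asymm (pq_pos τ h1) (pq_pos τ h2)

lemma pq_desc {x y : Fin n} (hpos : τ.symm x < τ.symm y) (hval : y < x) : PQ τ x y :=
  Relation.TransGen.single ⟨hpos, Or.inl hval⟩

/-- A chain `m ≺ x ≺ y` with `x < m < y` is a 213-chain. -/
lemma hasChain213 {x m y : Fin n} (h1 : PQ τ m x) (h2 : PQ τ x y) (hxm : x < m) (hmy : m < y) :
    HasChain p213 τ := by
  have hxy : x < y := hxm.trans hmy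
  refine ⟨![m, x, y], ?_, ?_⟩
  · intro ⟨i, hi⟩ ⟨j, hj⟩ hij
    have hij' : i < j := hij
    interval_cases i <;> interval_cases j <;>
        simp only [show ∀ h, ((⟨0, h⟩ : Fin 3)) = 0 from fun _ => rfl,
          show ∀ h, ((⟨1, h⟩ : Fin 3)) = 1 from fun _ => rfl,
          show ∀ h, ((⟨2, h⟩ : Fin 3)) = 2 from fun _ => rfl,
          show (![m, x, y]) (0 : Fin 3) = m from rfl,
          show (![m, x, y]) (1 : Fin 3) = x from rfl,
          show (![m, x, y]) (2 : Fin 3) = y from rfl] <;>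
      first
        | omega
        | exact h1
        | exact h2
        | exact h1.trans h2
  · have h1' : (x : ℕ) < m := hxm
    have h2' : (m : ℕ) < y := hmy
    intro ⟨i, hi⟩ ⟨j, hj⟩
    interval_cases i <;> interval_cases j <;>
        simp only [show ∀ h, ((⟨0, h⟩ : Fin 3)) = 0 from fun _ => rfl,
          show ∀ h, ((⟨1, h⟩ : Fin 3)) = 1 from fun _ => rfl,
          show ∀ h, ((⟨2, h⟩ : Fin 3)) = 2 from fun _ => rfl,
          show (![m, x, y]) (0 : Fin 3) = m from rfl,
          show (![m, x, y]) (1 : Fin 3) = x from rfl,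
          show (![m, x, y]) (2 : Fin 3) = y from rfl,
          show p213 (0 : Fin 3) = 1 from rfl,
          show p213 (1 : Fin 3) = 0 from rfl,
          show p213 (2 : Fin 3) = 2 from rfl,
          Fin.lt_def, Fin.val_zero, Fin.val_one, Fin.val_two] <;>
      omega

/-- Main construction: for every finite set `S` of values there is an enumeration of `S`
which is compatible with `P(τ)` and avoids the pattern 213. -/
lemma key (h : ¬ HasChain p213 τ) (S : Finset (Fin n)) :
    ∃ L : List (Fin n), L.Nodup ∧ (∀ x, x ∈ L ↔ x ∈ S) ∧
      L.Pairwise (fun x y => ¬ PQ τ y x) ∧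
      (∀ b a c : Fin n, List.Sublist [b, a, c] L → a < b → b < c → False) := by
  classical
  induction S using Finset.strongInductionOn with
  | _ S IH =>
  rcases eq_or_ne S ∅ with rfl | hSne
  · refine ⟨[], by simp, by simp, by simp, ?_⟩
    intro b a c hsub _ _
    simpa using hsub
  have hSne' : S.Nonempty := Finset.nonempty_iff_ne_empty.2 hSne
  set s := S.min' hSne' with hs
  have hsS : s ∈ S := S.min'_mem _
  by_cases hT : ∃ v ∈ S, PQ τ v s
  · -- there is a predecessor of `s` inside `S`
    set T := S.filter (fun v => PQ τ v s) with hTdef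
    have hTne : T.Nonempty := by
      obtain ⟨v, hv1, hv2⟩ := hT
      exact ⟨v, Finset.mem_filter.2 ⟨hv1, hv2⟩⟩
    set m := T.min' hTne with hm
    have hmT : m ∈ T := T.min'_mem _
    have hmS : m ∈ S := (Finset.mem_filter.1 hmT).1
    have hms : PQ τ m s := (Finset.mem_filter.1 hmT).2
    have hsm : s < m :=
      lt_of_le_of_ne (S.min'_le m hmS) (fun e => pq_irrefl τ s (e ▸ hms))
    set A := S.filter (fun v => m ≤ v) with hA
    set B := S.filter (fun v => s < v ∧ v < m) with hB
    have hAS : A ⊂ S := Finset.filter_ssubset.2 ⟨s, hsS, not_le.2 hsm⟩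
    have hBS : B ⊂ S := Finset.filter_ssubset.2 ⟨s, hsS, fun hc => lt_irrefl s hc.1⟩
    obtain ⟨LA, a1, a2, a3, a4⟩ := IH A hAS
    obtain ⟨LB, b1, b2, b3, b4⟩ := IH B hBS
    have hAmem : ∀ x ∈ LA, x ∈ S ∧ m ≤ x := fun x hx => Finset.mem_filter.1 ((a2 x).1 hx)
    have hBmem : ∀ x ∈ LB, x ∈ S ∧ s < x ∧ x < m := fun x hx => Finset.mem_filter.1 ((b2 x).1 hx)
    -- no element of `B` is a `P(τ)`-predecessor of `s`
    have hBnots : ∀ x, x ∈ S → x < m → ¬ PQ τ x s := by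
      intro x hxS hxm hc
      exact absurd (T.min'_le x (Finset.mem_filter.2 ⟨hxS, hc⟩)) (not_le.2 hxm)
    -- `m` is below every element of `B`
    have hmB : ∀ x, x ∈ S → s < x → x < m → PQ τ m x := by
      intro x hxS hsx hxm
      have hpos : τ.symm s < τ.symm x := by
        rcases lt_trichotomy (τ.symm x) (τ.symm s) with hl | he | hg
        · exact absurd (pq_desc τ hl hsx) (hBnots x hxS hxm)
        · exact absurd (τ.symm.injective he) (ne_of_gt hsx)
        · exact hg
      exact pq_desc τ ((pq_pos τ hms).trans hpos) hxm
    -- the crucial fact: no relation from `{s} ∪ B` into `A`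
    have cross : ∀ y, (y = s ∨ (y ∈ S ∧ s < y ∧ y < m)) → ∀ x, x ∈ S → m ≤ x →
        ¬ PQ τ y x := by
      rintro y hy x hxS hmx hPQ
      have hym : PQ τ m y := by
        rcases hy with rfl | ⟨hyS, hsy, hym⟩
        · exact hms
        · exact hmB y hyS hsy hym
      have hyltm : y < m := by
        rcases hy with rfl | ⟨_, _, hym⟩
        · exact hsm
        · exact hym
      rcases eq_or_lt_of_le hmx with rfl | hlt
      · exact pq_asymm τ hym hPQ
      · exact h (hasChain213 τ hym hPQ hyltm hlt)
    refine ⟨LA ++ s :: LB, ?_, ?_, ?_, ?_⟩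
    · -- Nodup
      rw [List.nodup_append]
      refine ⟨a1, ?_, ?_⟩
      · rw [List.nodup_cons]
        exact ⟨fun hc => lt_irrefl s (hBmem s hc).2.1, b1⟩
      · intro x hx y hx' hxy
        subst hxy
        have h1 := (hAmem x hx).2
        rcases List.mem_cons.1 hx' with rfl | hx''
        · exact absurd h1 (not_le.2 hsm)
        · exact absurd h1 (not_le.2 (hBmem x hx'').2.2)
    · -- membership
      intro x
      simp only [List.mem_append, List.mem_cons]
      constructor
      · rintro (hx | rfl | hx)
        · exact (hAmem x hx).1
        · exact hsS
        · exact (hBmem x hx).1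
      · intro hxS
        rcases le_or_gt m x with hmx | hxm
        · exact Or.inl ((a2 x).2 (Finset.mem_filter.2 ⟨hxS, hmx⟩))
        · rcases eq_or_lt_of_le (S.min'_le x hxS) with he | hsx
          · exact Or.inr (Or.inl he.symm)
          · exact Or.inr (Or.inr ((b2 x).2 (Finset.mem_filter.2 ⟨hxS, hsx, hxm⟩)))
    · -- Pairwise
      rw [List.pairwise_append]
      refine ⟨a3, ?_, ?_⟩
      · rw [List.pairwise_cons]
        refine ⟨?_, b3⟩
        intro y hy
        have hy' := hBmem y hy
        exact hBnots y hy'.1 hy'.2.2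
      · intro x hx y hy
        have hx' := hAmem x hx
        rcases List.mem_cons.1 hy with rfl | hy'
        · exact cross _ (Or.inl rfl) x hx'.1 hx'.2
        · exact cross y (Or.inr (hBmem y hy')) x hx'.1 hx'.2
    · -- avoids 213
      intro b a c hsub hab hbc
      rcases List.sublist_append_iff.1 hsub with ⟨u, v, huv, hu, hv⟩
      have hcm : ∀ x, x ∈ v → x < m := by
        intro x hx
        have hx' := hv.subset hx
        rcases List.mem_cons.1 hx' with rfl | hx''
        · exact hsm
        · exact (hBmem x hx'').2.2
      rcases u with _ | ⟨b', _ | ⟨a', _ | ⟨c', u'⟩⟩⟩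
      · have hv' : List.Sublist [b, a, c] (s :: LB) := by
          rw [List.nil_append] at huv
          rw [← huv] at hv
          exact hv
        cases hv' with
        | cons _ hsub' => exact b4 b a c hsub' hab hbc
        | cons_cons _ hsub' =>
          have haB := (hBmem a (hsub'.subset (by simp))).2.1
          exact absurd hab (not_lt.2 haB.le)
      · obtain ⟨rfl, rfl⟩ : b = b' ∧ [a, c] = v := by simpa using huv
        have hbA := (hAmem b (hu.subset (by simp))).2
        have := hcm c (by simp)
        exact absurd (hbc.trans this) (not_lt.2 hbA)
      · obtain ⟨rfl, rfl, rfl⟩ : b = b' ∧ a = a' ∧ [c] = v := by simpa using huv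
        have haA := (hAmem a (hu.subset (by simp))).2
        have := hcm c (by simp)
        exact absurd ((hab.trans hbc).trans this) (not_lt.2 haA)
      · obtain ⟨rfl, rfl, rfl, rfl, rfl⟩ : b = b' ∧ a = a' ∧ c = c' ∧ u' = [] ∧ v = [] := by
          simpa [List.append_eq_cons_iff] using huv
        exact a4 b a c (by simpa using hu) hab hbc
  · -- no predecessor of `s` inside `S`: put `s` first
    obtain ⟨L', h1, h2, h3, h4⟩ := IH (S.erase s) (Finset.erase_ssubset hsS)
    have hL'S : ∀ x ∈ L', x ∈ S ∧ x ≠ s := by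
      intro x hx
      have := Finset.mem_erase.1 ((h2 x).1 hx)
      exact ⟨this.2, this.1⟩
    refine ⟨s :: L', ?_, ?_, ?_, ?_⟩
    · rw [List.nodup_cons]
      exact ⟨fun hc => (hL'S s hc).2 rfl, h1⟩
    · intro x
      simp only [List.mem_cons]
      constructor
      · rintro (rfl | hx)
        · exact hsS
        · exact (hL'S x hx).1
      · intro hxS
        rcases eq_or_ne x s with rfl | hxs
        · exact Or.inl rfl
        · exact Or.inr ((h2 x).2 (Finset.mem_erase.2 ⟨hxs, hxS⟩))
    · rw [List.pairwise_cons]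
      refine ⟨?_, h3⟩
      intro y hy hPQ
      exact hT ⟨y, (hL'S y hy).1, hPQ⟩
    · intro b a c hsub hab hbc
      cases hsub with
      | cons _ hsub' => exact h4 b a c hsub' hab hbc
      | cons_cons _ hsub' =>
        have haS := (hL'S a (hsub'.subset (by simp))).1
        exact absurd (S.min'_le a haS) (not_le.2 hab)

end Aux

/-- If `P(τ)` contains no `213`-chain then it has a `213`-avoiding linear
extension. -/
theorem no_chain_213_linear_extension {n : ℕ} (τ : Equiv.Perm (Fin n)) (h : ¬ HasChain p213 τ) :
    ∃ σ : Equiv.Perm (Fin n), Allowable σ τ ∧ ¬ Contains p213 σ := by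
  classical
  obtain ⟨L, hnd, hmem, hpw, hav⟩ := key τ h Finset.univ
  have hlen : L.length = n := by
    have h1 : L.toFinset = Finset.univ :=
      Finset.eq_univ_iff_forall.2 fun x => List.mem_toFinset.2 ((hmem x).2 (Finset.mem_univ x))
    have h2 := List.toFinset_card_of_nodup hnd
    rw [h1] at h2
    simpa using h2.symm
  let f : Fin n → Fin n := fun i => L.get (Fin.cast hlen.symm i)
  have hinj : Function.Injective f := by
    intro i j hij
    have := (List.Nodup.get_inj_iff hnd).1 hij
    have h2 := congrArg Fin.val this
    exact Fin.ext h2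
  let σ : Equiv.Perm (Fin n) := Equiv.ofBijective f (Finite.injective_iff_bijective.1 hinj)
  have hσ : ∀ i : Fin n, σ i = L.get (Fin.cast hlen.symm i) := fun i => rfl
  refine ⟨σ, ?_, ?_⟩
  · intro x y hxy
    have hx : L.get (Fin.cast hlen.symm (σ.symm x)) = x := σ.apply_symm_apply x
    have hy : L.get (Fin.cast hlen.symm (σ.symm y)) = y := σ.apply_symm_apply y
    rcases lt_trichotomy (σ.symm x) (σ.symm y) with h' | h' | h'
    · exact h'
    · exfalso
      apply pq_irrefl τ x
      have hxy' : x = y := by rw [← hx, ← hy, h']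
      exact hxy' ▸ hxy
    · exfalso
      have hlt : Fin.cast hlen.symm (σ.symm y) < Fin.cast hlen.symm (σ.symm x) := h'
      have := List.pairwise_iff_get.1 hpw _ _ hlt
      rw [hx, hy] at this
      exact this hxy
  · rintro ⟨e, he⟩
    have h10 : p213 1 < p213 0 := by
      show (0 : Fin 3) < 1
      decide
    have h02 : p213 0 < p213 2 := by
      show (1 : Fin 3) < 2
      decide
    have hab : σ (e 1) < σ (e 0) := (he 1 0).1 h10
    have hbc : σ (e 0) < σ (e 2) := (he 0 2).1 h02
    have h01 : e 0 < e 1 := e.strictMono (by decide)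
    have h12 : e 1 < e 2 := e.strictMono (by decide)
    have hsub : List.Sublist [σ (e 0), σ (e 1), σ (e 2)] L := by
      rw [List.sublist_iff_exists_fin_orderEmbedding_get_eq]
      have hmono : StrictMono (fun i : Fin 3 =>
          (![Fin.cast hlen.symm (e 0), Fin.cast hlen.symm (e 1), Fin.cast hlen.symm (e 2)] i :
            Fin L.length)) := by
        intro ⟨i, hi⟩ ⟨j, hj⟩ hij
        have hij' : i < j := hij
        have c01 : Fin.cast hlen.symm (e 0) < Fin.cast hlen.symm (e 1) := h01
        have c12 : Fin.cast hlen.symm (e 1) < Fin.cast hlen.symm (e 2) := h12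
        interval_cases i <;> interval_cases j <;>
            simp only [show ∀ h, ((⟨0, h⟩ : Fin 3)) = 0 from fun _ => rfl,
              show ∀ h, ((⟨1, h⟩ : Fin 3)) = 1 from fun _ => rfl,
              show ∀ h, ((⟨2, h⟩ : Fin 3)) = 2 from fun _ => rfl,
              Matrix.cons_val_zero, Matrix.cons_val_one, Matrix.head_cons,
              Matrix.cons_val_two, Matrix.tail_cons] <;>
          first
            | omega
            | exact c01
            | exact c12
            | exact c01.trans c12
      refine ⟨OrderEmbedding.ofStrictMono _ hmono, ?_⟩
      intro ⟨i, hi⟩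
      have hi' : i < 3 := by simpa using hi
      interval_cases i <;> rfl
    exact hav _ _ _ hsub hab hbc
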